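/- Let G and H be groups and D ≤ G × H a subgroup with p₁(D) = G and p₂(D) = H. Let D° = {(h,g) ∈ H × G : (g,h) ∈ D}. Then D * D° = {(g₁,g₂) ∈ G × G : g₁g₂⁻¹ ∈ k₁(D)}, and moreover (D * D°) * (D * D°) = D * D°. -/

import Mathlib

/-- The star product `M * N` of subgroups `M ≤ G × H` and `N ≤ H × K`:
`{(g,k) | ∃ h, (g,h) ∈ M ∧ (h,k) ∈ N}`. -/
def starProd {G H K : Type*} [Group G] [Group H] [Group K]
    (M : Subgroup (G × H)) (N : Subgroup (H × K)) : Subgroup (G × K) where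
  carrier := {x | ∃ h : H, (x.1, h) ∈ M ∧ (h, x.2) ∈ N}
  one_mem' := ⟨1, M.one_mem, N.one_mem⟩
  mul_mem' := by
    rintro ⟨g, k⟩ ⟨g', k'⟩ ⟨h, hM, hN⟩ ⟨h', hM', hN'⟩
    exact ⟨h * h', M.mul_mem hM hM', N.mul_mem hN hN'⟩
  inv_mem' := by
    rintro ⟨g, k⟩ ⟨h, hM, hN⟩
    exact ⟨h⁻¹, M.inv_mem hM, N.inv_mem hN⟩

/-- The opposite subgroup `D° = {(h,g) | (g,h) ∈ D} ≤ H × G` of `D ≤ G × H`. -/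
def oppSub {G H : Type*} [Group G] [Group H] (D : Subgroup (G × H)) :
    Subgroup (H × G) :=
  D.map (MulEquiv.prodComm : G × H ≃* H × G).toMonoidHom

/-- For `D ≤ G × H` with full projections, `D * D° = {(g₁,g₂) | g₁g₂⁻¹ ∈ k₁(D)}`
and `D * D°` is idempotent for the star product. -/
theorem starProd_opp_eq_and_idem {G H : Type*} [Group G] [Group H]
    (D : Subgroup (G × H))
    (hp1 : D.map (MonoidHom.fst G H) = ⊤)
    (hp2 : D.map (MonoidHom.snd G H) = ⊤) :
    (∀ x : G × G,
      x ∈ starProd D (oppSub D) ↔ x.1 * x.2⁻¹ ∈ {g : G | (g, (1 : H)) ∈ D}) ∧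
    starProd (starProd D (oppSub D)) (starProd D (oppSub D))
      = starProd D (oppSub D) := by
  have hopp : ∀ h g, (h, g) ∈ oppSub D ↔ (g, h) ∈ D := by
    intro h g
    constructor
    · rintro ⟨⟨a, b⟩, hab, heq⟩
      obtain ⟨rfl, rfl⟩ : b = h ∧ a = g := by
        simpa [MulEquiv.prodComm, Prod.ext_iff] using heq
      exact hab
    · intro hd
      exact ⟨(g, h), hd, rfl⟩
  have hsurj : ∀ g : G, ∃ h : H, (g, h) ∈ D := by
    intro g
    have : g ∈ D.map (MonoidHom.fst G H) := hp1 ▸ Subgroup.mem_top g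
    obtain ⟨⟨a, b⟩, hab, rfl⟩ := this
    exact ⟨b, hab⟩
  have key : ∀ x : G × G,
      x ∈ starProd D (oppSub D) ↔ x.1 * x.2⁻¹ ∈ {g : G | (g, (1 : H)) ∈ D} := by
    rintro ⟨g₁, g₂⟩
    constructor
    · rintro ⟨h, h1, h2⟩
      have h2' : (g₂, h) ∈ D := (hopp h g₂).1 h2
      have := D.mul_mem h1 (D.inv_mem h2')
      simpa using this
    · intro hk
      obtain ⟨h, hh⟩ := hsurj g₂
      refine ⟨h, ?_, (hopp h g₂).2 hh⟩
      have := D.mul_mem hk hh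
      simpa using this
  refine ⟨key, ?_⟩
  ext ⟨g₁, g₂⟩
  constructor
  · rintro ⟨m, h1, h2⟩
    have h1' := (key (g₁, m)).1 h1
    have h2' := (key (m, g₂)).1 h2
    have := D.mul_mem h1' h2'
    refine (key (g₁, g₂)).2 ?_
    simpa [mul_assoc] using this
  · intro hx
    exact ⟨g₂, hx, (key (g₂, g₂)).2 (by simp only [mul_inv_cancel, Set.mem_setOf_eq]; exact D.one_mem)⟩
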